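/- Let T be a tree obtained from the path P_{2k−1} (k ≥ 2) by attaching b ≥ 1 pendent vertices to some of its vertices. If the diameter of T is 2k−2 or 2k−1, then μ(T) < k + 1/2. -/

import Mathlib

open SimpleGraph Finset

/-- The Wiener index: sum of distances over unordered pairs (as a rational). -/
noncomputable def wiener {V : Type*} [Fintype V] (G : SimpleGraph V) : ℚ :=
  (∑ u : V, ∑ v : V, (G.dist u v : ℚ)) / 2

/-- The average distance `μ(G) = W(G) / C(n,2)`. -/
noncomputable def avgDist {V : Type*} [Fintype V] (G : SimpleGraph V) : ℚ :=
  wiener G / ((Fintype.card V).choose 2 : ℚ)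

/-- `a` is the independence number of `G`. -/
def IsIndepNum {V : Type*} (G : SimpleGraph V) (a : ℕ) : Prop :=
  IsGreatest {m | ∃ s : Finset V, s.card = m ∧ ∀ x ∈ s, ∀ y ∈ s, ¬ G.Adj x y} a

/-- The tree `H_{a,b}`: a path on `a` vertices with `⌊b/2⌋` pendent vertices attached to
one end and `⌈b/2⌉` pendent vertices attached to the other end. -/
def Hab (a b : ℕ) : SimpleGraph (Fin (a + b)) :=
  SimpleGraph.fromRel (fun i j =>
    ((i : ℕ) + 1 = (j : ℕ) ∧ (j : ℕ) < a) ∨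
    (a ≤ (i : ℕ) ∧ (i : ℕ) < a + b / 2 ∧ (j : ℕ) = 0) ∨
    (a + b / 2 ≤ (i : ℕ) ∧ (j : ℕ) = a - 1))

def nab (a b : ℕ) : ℕ := (a - b) + (b - a)

lemma nab_comm (a b : ℕ) : nab a b = nab b a := by unfold nab; omega


lemma sum_nab_eq (m : ℕ) : ∀ x, x < m →
    2 * (∑ i ∈ range m, nab x i) = x * (x + 1) + (m - 1 - x) * (m - x) := by
  induction m with
  | zero => omega
  | succ m ih =>
    intro x hx
    rw [Finset.sum_range_succ]
    rcases Nat.lt_or_ge x m with h | h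
    · have hih := ih x h
      have h1 : nab x m = m - x := by unfold nab; omega
      have hc : m - 1 - x + 1 = m - x := by omega
      have hc2 : m + 1 - 1 - x = m - x := by omega
      have hc3 : m + 1 - x = (m - 1 - x) + 2 := by omega
      rw [Nat.mul_add, hih, h1, hc2, hc3]
      have hc4 : m - x = (m - 1 - x) + 1 := by omega
      rw [hc4]
      ring
    · have hxm : x = m := by omega
      subst hxm
      have h1 : ∀ i ∈ range x, nab x i = x - i := by
        intro i hi; have := mem_range.mp hi; unfold nab; omega
      rw [Finset.sum_congr rfl h1, nab]
      have h2 : ∑ i ∈ range x, (x - i) = ∑ i ∈ range x, (i + 1) := by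
        rw [← Finset.sum_range_reflect]
        exact Finset.sum_congr rfl (fun i hi => by have := mem_range.mp hi; omega)
      rw [h2, Finset.sum_add_distrib, Finset.sum_const, card_range, smul_eq_mul, mul_one]
      have h3 := Finset.sum_range_id_mul_two x
      have hc : x + 1 - 1 - x = 0 := by omega
      rw [hc]
      have h4 : x * (x - 1) + 2 * x = x * (x + 1) := by
        by_cases hx0 : x = 0
        · simp [hx0]
        · obtain ⟨y, rfl⟩ := Nat.exists_eq_succ_of_ne_zero hx0
          simp only [Nat.succ_sub_one]
          ring_nf
          rw [Nat.succ_eq_add_one]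
          ring
      omega

lemma sum_tri (m : ℕ) : 3 * ∑ i ∈ range m, i * (i + 1) = (m - 1) * m * (m + 1) := by
  induction m with
  | zero => simp
  | succ m ih =>
    rw [Finset.sum_range_succ, Nat.mul_add, ih]
    cases m with
    | zero => simp
    | succ y => simp only [Nat.succ_sub_one]; ring

lemma sum_tri_reflect (m : ℕ) :
    ∑ i ∈ range m, (m - 1 - i) * (m - i) = ∑ i ∈ range m, i * (i + 1) := by
  rw [← Finset.sum_range_reflect (fun i => (m - 1 - i) * (m - i)) m]
  refine Finset.sum_congr rfl (fun i hi => ?_)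
  have him := mem_range.mp hi
  have h1 : m - 1 - (m - 1 - i) = i := by omega
  have h2 : m - (m - 1 - i) = i + 1 := by omega
  rw [h1, h2]

lemma sum_sum_nab (m : ℕ) :
    6 * ∑ i ∈ range m, ∑ j ∈ range m, nab i j = 2 * ((m - 1) * m * (m + 1)) := by
  have h1 : ∀ i ∈ range m, 6 * ∑ j ∈ range m, nab i j
      = 3 * (i * (i + 1)) + 3 * ((m - 1 - i) * (m - i)) := by
    intro i hi
    have := sum_nab_eq m i (mem_range.mp hi)
    omega
  calc 6 * ∑ i ∈ range m, ∑ j ∈ range m, nab i j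
      = ∑ i ∈ range m, 6 * ∑ j ∈ range m, nab i j := by rw [Finset.mul_sum]
    _ = ∑ i ∈ range m, (3 * (i * (i + 1)) + 3 * ((m - 1 - i) * (m - i))) :=
        Finset.sum_congr rfl h1
    _ = 3 * (∑ i ∈ range m, i * (i + 1)) + 3 * (∑ i ∈ range m, (m - 1 - i) * (m - i)) := by
        rw [Finset.sum_add_distrib, Finset.mul_sum, Finset.mul_sum]
    _ = 2 * ((m - 1) * m * (m + 1)) := by rw [sum_tri_reflect, sum_tri]; ring

lemma A_bound (s x : ℕ) (hs : 2 ≤ s) (hx : x ≤ s) :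
    24 * (∑ i ∈ range (s + 1), nab x i) + 24 * (s - 1) * (if 0 < x ∧ x < s then 1 else 0)
      ≤ 12 * (s * (s + 1)) := by
  have h2A := sum_nab_eq (s + 1) x (by omega)
  have hc1 : s + 1 - 1 - x = s - x := by omega
  rw [hc1] at h2A
  by_cases hcond : 0 < x ∧ x < s
  · rw [if_pos hcond]
    obtain ⟨x', rfl⟩ : ∃ x', x = x' + 1 := ⟨x - 1, by omega⟩
    obtain ⟨y', rfl⟩ : ∃ y', s = x' + y' + 2 := ⟨s - x' - 2, by omega⟩
    have e1 : x' + y' + 2 - (x' + 1) = y' + 1 := by omega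
    have e2 : x' + y' + 2 + 1 - (x' + 1) = y' + 2 := by omega
    have e3 : x' + y' + 2 - 1 = x' + y' + 1 := by omega
    rw [e1, e2] at h2A
    rw [e3]
    have key : 12 * ((x' + 1) * (x' + 1 + 1) + (y' + 1) * (y' + 2)) + 24 * (x' + y' + 1) * 1
        ≤ 12 * ((x' + y' + 2) * (x' + y' + 2 + 1)) := by
      nlinarith [Nat.zero_le (x' * y')]
    omega
  · rw [if_neg hcond]
    have hx0 : x = 0 ∨ x = s := by omega
    rcases hx0 with rfl | rfl
    · have e1 : (0:ℕ) * (0 + 1) = 0 := rfl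
      have e2 : s - 0 = s := by omega
      have e3 : s + 1 - 0 = s + 1 := by omega
      rw [e1, e2, e3] at h2A
      omega
    · have e1 : x - x = 0 := by omega
      rw [e1, Nat.zero_mul] at h2A
      omega

lemma thresh_pt (s α β : ℕ) (hα : α ≤ s) (hβ : β ≤ s) :
    nab α β = ∑ t ∈ range s,
      ((if α ≤ t ∧ ¬ β ≤ t then 1 else 0) + (if β ≤ t ∧ ¬ α ≤ t then 1 else 0)) := by
  rw [Finset.sum_add_distrib]
  have key : ∀ a b : ℕ, a ≤ s → b ≤ s →
      ∑ t ∈ range s, (if a ≤ t ∧ ¬ b ≤ t then 1 else 0) = b - a := by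
    intro a b ha hb
    rw [← Finset.card_filter]
    have : (range s).filter (fun t => a ≤ t ∧ ¬ b ≤ t) = Finset.Ico a b := by
      ext t
      simp only [Finset.mem_filter, Finset.mem_range, Finset.mem_Ico]
      omega
    rw [this, Nat.card_Ico]
  rw [key α β hα hβ, key β α hβ hα]
  unfold nab
  omega

lemma perthresh_l (l h b r : ℕ) (hsum : l + h = b) (hlr : l ≤ r) :
    4 * l * h ≤ (b - 1) ^ 2 + 4 * r := by
  cases h with
  | zero => simp
  | succ h' =>
    have hb1 : b - 1 = l + h' := by omega
    rw [hb1]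
    nlinarith [two_mul_le_add_sq l h']

lemma perthresh_h (l h b r : ℕ) (hsum : l + h = b) (hhr : h ≤ r) :
    4 * l * h ≤ (b - 1) ^ 2 + 4 * r := by
  have h1 := perthresh_l h l b r (by omega) hhr
  have h2 : 4 * l * h = 4 * h * l := by ring
  omega

lemma final_arith (s b : ℕ) (hs : 2 ≤ s) (hb : 1 ≤ b) :
    4 * (s * (s + 1) * (s + 2)) + 24 * (b * (s + 1)) + 12 * (b * (s * (s + 1)))
      + 6 * ((s - 1) * (b - 1) ^ 2) + 24 * (b * b)
      < 6 * ((s + 3) * ((s + 1 + b) * (s + b))) := by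
  obtain ⟨s', rfl⟩ : ∃ s', s = s' + 2 := ⟨s - 2, by omega⟩
  obtain ⟨b', rfl⟩ : ∃ b', b = b' + 1 := ⟨b - 1, by omega⟩
  have h1 : s' + 2 - 1 = s' + 1 := by omega
  have h2 : b' + 1 - 1 = b' := by omega
  rw [h1, h2]
  nlinarith [Nat.zero_le (s' * b'), Nat.zero_le (s' * s' * s'), Nat.zero_le (s' * s' * b')]

lemma thresh_pt' (s α β : ℕ) (hα : α ≤ s) (hβ : β ≤ s) :
    nab α β = ∑ t ∈ range s,
      ((if α ≤ t ∧ ¬ β ≤ t then 1 else 0) + (if β ≤ t ∧ ¬ α ≤ t then 1 else 0)) := by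
  rw [Finset.sum_add_distrib]
  have key : ∀ a b : ℕ, a ≤ s → b ≤ s →
      ∑ t ∈ range s, (if a ≤ t ∧ ¬ b ≤ t then 1 else 0) = b - a := by
    intro a b ha hb
    rw [← Finset.card_filter]
    have : (range s).filter (fun t => a ≤ t ∧ ¬ b ≤ t) = Finset.Ico a b := by
      ext t
      simp only [Finset.mem_filter, Finset.mem_range, Finset.mem_Ico]
      omega
    rw [this, Nat.card_Ico]
  rw [key α β hα hβ, key β α hβ hα]
  unfold nab
  omega

lemma dord_eq {V : Type*} [DecidableEq V] (Q : Finset V) (g : V → ℕ) (s : ℕ)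
    (hgs : ∀ v ∈ Q, g v ≤ s) :
    ∑ v ∈ Q, ∑ w ∈ Q, nab (g v) (g w)
      = ∑ t ∈ range s, 2 * ((Q.filter (fun v => g v ≤ t)).card
          * (Q.filter (fun v => ¬ g v ≤ t)).card) := by
  have h1 : ∀ v ∈ Q, ∑ w ∈ Q, nab (g v) (g w)
      = ∑ w ∈ Q, ∑ t ∈ range s,
        ((if g v ≤ t ∧ ¬ g w ≤ t then 1 else 0) + (if g w ≤ t ∧ ¬ g v ≤ t then 1 else 0)) := by
    intro v hv
    exact Finset.sum_congr rfl (fun w hw => thresh_pt' s (g v) (g w) (hgs v hv) (hgs w hw))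
  rw [Finset.sum_congr rfl h1]
  have h2 : ∑ v ∈ Q, ∑ w ∈ Q, ∑ t ∈ range s,
        ((if g v ≤ t ∧ ¬ g w ≤ t then 1 else 0) + (if g w ≤ t ∧ ¬ g v ≤ t then 1 else 0))
      = ∑ t ∈ range s, ∑ v ∈ Q, ∑ w ∈ Q,
        ((if g v ≤ t ∧ ¬ g w ≤ t then 1 else 0) + (if g w ≤ t ∧ ¬ g v ≤ t then 1 else 0)) := by
    calc ∑ v ∈ Q, ∑ w ∈ Q, ∑ t ∈ range s,
          ((if g v ≤ t ∧ ¬ g w ≤ t then 1 else 0) + (if g w ≤ t ∧ ¬ g v ≤ t then 1 else 0))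
        = ∑ v ∈ Q, ∑ t ∈ range s, ∑ w ∈ Q,
          ((if g v ≤ t ∧ ¬ g w ≤ t then 1 else 0) + (if g w ≤ t ∧ ¬ g v ≤ t then 1 else 0)) :=
          Finset.sum_congr rfl (fun v _ => Finset.sum_comm)
      _ = ∑ t ∈ range s, ∑ v ∈ Q, ∑ w ∈ Q,
          ((if g v ≤ t ∧ ¬ g w ≤ t then 1 else 0) + (if g w ≤ t ∧ ¬ g v ≤ t then 1 else 0)) :=
          Finset.sum_comm
  rw [h2]
  refine Finset.sum_congr rfl (fun t _ => ?_)
  have hsplit : ∀ (A B : V → Prop) (_ : DecidablePred A) (_ : DecidablePred B),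
      ∑ v ∈ Q, ∑ w ∈ Q, (if A v ∧ B w then (1:ℕ) else 0)
        = (Q.filter A).card * (Q.filter B).card := by
    intro A B dA dB
    have e1 : ∀ v w, (if A v ∧ B w then (1:ℕ) else 0)
        = (if A v then 1 else 0) * (if B w then 1 else 0) := by
      intro v w
      by_cases ha : A v <;> by_cases hbb : B w <;> simp [ha, hbb]
    calc ∑ v ∈ Q, ∑ w ∈ Q, (if A v ∧ B w then (1:ℕ) else 0)
        = ∑ v ∈ Q, ∑ w ∈ Q, (if A v then (1:ℕ) else 0) * (if B w then 1 else 0) :=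
          Finset.sum_congr rfl (fun v _ => Finset.sum_congr rfl (fun w _ => e1 v w))
      _ = (∑ v ∈ Q, if A v then (1:ℕ) else 0) * (∑ w ∈ Q, if B w then (1:ℕ) else 0) :=
          (Finset.sum_mul_sum _ _ _ _).symm
      _ = (Q.filter A).card * (Q.filter B).card := by
          rw [← Finset.card_filter, ← Finset.card_filter]
  have hsplit2 : ∀ (A B : V → Prop) (_ : DecidablePred A) (_ : DecidablePred B),
      ∑ v ∈ Q, ∑ w ∈ Q, (if B w ∧ A v then (1:ℕ) else 0)
        = (Q.filter A).card * (Q.filter B).card := by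
    intro A B dA dB
    have e1 : ∀ v w, (if B w ∧ A v then (1:ℕ) else 0)
        = (if A v then 1 else 0) * (if B w then 1 else 0) := by
      intro v w
      by_cases ha : A v <;> by_cases hbb : B w <;> simp [ha, hbb]
    calc ∑ v ∈ Q, ∑ w ∈ Q, (if B w ∧ A v then (1:ℕ) else 0)
        = ∑ v ∈ Q, ∑ w ∈ Q, (if A v then (1:ℕ) else 0) * (if B w then 1 else 0) :=
          Finset.sum_congr rfl (fun v _ => Finset.sum_congr rfl (fun w _ => e1 v w))
      _ = (∑ v ∈ Q, if A v then (1:ℕ) else 0) * (∑ w ∈ Q, if B w then (1:ℕ) else 0) :=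
          (Finset.sum_mul_sum _ _ _ _).symm
      _ = (Q.filter A).card * (Q.filter B).card := by
          rw [← Finset.card_filter, ← Finset.card_filter]
  simp only [Finset.sum_add_distrib]
  rw [hsplit (fun v => g v ≤ t) (fun w => ¬ g w ≤ t) (fun _ => inferInstance) (fun _ => inferInstance),
      hsplit2 (fun v => ¬ g v ≤ t) (fun w => g w ≤ t) (fun _ => inferInstance) (fun _ => inferInstance)]
  have hcc : (Q.filter (fun v => ¬ g v ≤ t)).card * (Q.filter (fun w => g w ≤ t)).card
      = (Q.filter (fun v => g v ≤ t)).card * (Q.filter (fun v => ¬ g v ≤ t)).card := Nat.mul_comm _ _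
  omega

lemma perthresh_l' (l h b r : ℕ) (hsum : l + h = b) (hlr : l ≤ r) :
    4 * (l * h) ≤ (b - 1) ^ 2 + 4 * r := by
  cases h with
  | zero => simp
  | succ h' =>
    have hb1 : b - 1 = l + h' := by omega
    rw [hb1]
    nlinarith [two_mul_le_add_sq l h']

lemma perthresh_h' (l h b r : ℕ) (hsum : l + h = b) (hhr : h ≤ r) :
    4 * (l * h) ≤ (b - 1) ^ 2 + 4 * r := by
  have h1 := perthresh_l' h l b r (by omega) hhr
  have h2 : l * h = h * l := Nat.mul_comm _ _
  omega

lemma thresh_sum {V : Type*} [DecidableEq V] (Q : Finset V) (g : V → ℕ) (s b r : ℕ)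
    (hs : 2 ≤ s) (hQb : Q.card = b)
    (hgs : ∀ v ∈ Q, g v ≤ s)
    (hwin : ∀ v ∈ Q, ∀ w ∈ Q, v ≠ w → nab (g v) (g w) ≤ s - 1)
    (hr : r = (Q.filter (fun v => 0 < g v ∧ g v < s)).card) :
    ∑ t ∈ range s, 4 * ((Q.filter (fun v => g v ≤ t)).card
        * (Q.filter (fun v => ¬ g v ≤ t)).card)
      ≤ (s - 1) * ((b - 1) ^ 2 + 4 * r) := by
  obtain ⟨s', rfl⟩ : ∃ s', s = s' + 2 := ⟨s - 2, by omega⟩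
  have hsm : s' + 2 - 1 = s' + 1 := by omega
  rw [hsm]
  have hLH : ∀ t, (Q.filter (fun v => g v ≤ t)).card
      + (Q.filter (fun v => ¬ g v ≤ t)).card = b := by
    intro t
    rw [Finset.card_filter_add_card_filter_not, hQb]
  by_cases hq : (Q.filter (fun v => ¬ g v ≤ s' + 1)).card = 0
  · -- no vertex attached at position s
    have hHempty : Q.filter (fun v => ¬ g v ≤ s' + 1) = ∅ := Finset.card_eq_zero.mp hq
    rw [Finset.sum_range_succ]
    have hlast : (Q.filter (fun v => ¬ g v ≤ s' + 1)).card = 0 := hq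
    have hbound : ∀ t ∈ range (s' + 1),
        4 * ((Q.filter (fun v => g v ≤ t)).card * (Q.filter (fun v => ¬ g v ≤ t)).card)
          ≤ (b - 1) ^ 2 + 4 * r := by
      intro t ht
      have htl := mem_range.mp ht
      apply perthresh_h' _ _ _ _ (hLH t)
      rw [hr]
      apply Finset.card_le_card
      intro v hv
      rw [Finset.mem_filter] at hv ⊢
      refine ⟨hv.1, by omega, ?_⟩
      have : v ∉ Q.filter (fun v => ¬ g v ≤ s' + 1) := by rw [hHempty]; exact Finset.notMem_empty v
      rw [Finset.mem_filter] at this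
      push_neg at this
      have := this hv.1
      omega
    calc (∑ t ∈ range (s' + 1), 4 * ((Q.filter (fun v => g v ≤ t)).card
            * (Q.filter (fun v => ¬ g v ≤ t)).card))
          + 4 * ((Q.filter (fun v => g v ≤ s' + 1)).card
            * (Q.filter (fun v => ¬ g v ≤ s' + 1)).card)
        ≤ (∑ _t ∈ range (s' + 1), ((b - 1) ^ 2 + 4 * r)) + 0 := by
          gcongr with t ht
          · exact hbound t ht
          · rw [hlast, Nat.mul_zero, Nat.mul_zero]
      _ = (s' + 1) * ((b - 1) ^ 2 + 4 * r) := by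
          rw [Finset.sum_const, Finset.card_range, smul_eq_mul, Nat.add_zero]
  · -- some vertex attached at position s = s'+2
    obtain ⟨v₀, hv₀⟩ := Finset.card_ne_zero.mp hq
    rw [Finset.mem_filter] at hv₀
    have hgv₀ : g v₀ = s' + 2 := by have := hgs v₀ hv₀.1; have := hv₀.2; omega
    have hL0 : Q.filter (fun v => g v ≤ 0) = ∅ := by
      rw [Finset.eq_empty_iff_forall_notMem]
      intro w hw
      rw [Finset.mem_filter] at hw
      have hgw : g w = 0 := by omega
      have hne : w ≠ v₀ := by intro h; rw [h, hgv₀] at hgw; omega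
      have := hwin w hw.1 v₀ hv₀.1 hne
      unfold nab at this
      omega
    rw [Finset.sum_range_succ']
    have hfirst : 4 * ((Q.filter (fun v => g v ≤ 0)).card
        * (Q.filter (fun v => ¬ g v ≤ 0)).card) = 0 := by
      rw [hL0, Finset.card_empty, Nat.zero_mul, Nat.mul_zero]
    have hbound : ∀ t ∈ range (s' + 1),
        4 * ((Q.filter (fun v => g v ≤ t + 1)).card * (Q.filter (fun v => ¬ g v ≤ t + 1)).card)
          ≤ (b - 1) ^ 2 + 4 * r := by
      intro t ht
      have htl := mem_range.mp ht
      apply perthresh_l' _ _ _ _ (hLH (t + 1))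
      rw [hr]
      apply Finset.card_le_card
      intro v hv
      rw [Finset.mem_filter] at hv ⊢
      refine ⟨hv.1, ?_, by omega⟩
      have : v ∉ Q.filter (fun v => g v ≤ 0) := by rw [hL0]; exact Finset.notMem_empty v
      rw [Finset.mem_filter] at this
      push_neg at this
      have := this hv.1
      omega
    calc (∑ t ∈ range (s' + 1), 4 * ((Q.filter (fun v => g v ≤ t + 1)).card
            * (Q.filter (fun v => ¬ g v ≤ t + 1)).card))
          + 4 * ((Q.filter (fun v => g v ≤ 0)).card
            * (Q.filter (fun v => ¬ g v ≤ 0)).card)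
        ≤ (∑ _t ∈ range (s' + 1), ((b - 1) ^ 2 + 4 * r)) + 0 := by
          gcongr with t ht
          · exact hbound t ht
          · rw [hL0, Finset.card_empty, Nat.zero_mul, Nat.mul_zero]
      _ = (s' + 1) * ((b - 1) ^ 2 + 4 * r) := by
          rw [Finset.sum_const, Finset.card_range, smul_eq_mul, Nat.add_zero]

/-- a tree obtained from `P_{2k-1}` by attaching `b ≥ 1` pendent vertices,
whose diameter is `2k-2` or `2k-1`, has average distance `< k + 1/2`. -/
theorem stmt10 {V : Type*} [Fintype V] (T : SimpleGraph V) (hT : T.IsTree)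
    (k b : ℕ) (hk : 2 ≤ k) (hb : 1 ≤ b) (hcard : Fintype.card V = 2 * k - 1 + b)
    (p : Fin (2 * k - 1) → V) (hinj : Function.Injective p)
    (hpath : ∀ i j, T.Adj (p i) (p j) ↔ ((i : ℕ) + 1 = (j : ℕ) ∨ (j : ℕ) + 1 = (i : ℕ)))
    (hout : ∀ v, (∀ i, v ≠ p i) →
      (T.neighborSet v).ncard = 1 ∧ ∀ u, T.Adj v u → ∃ i, u = p i)
    (hdiam : T.diam = 2 * k - 2 ∨ T.diam = 2 * k - 1) :
    avgDist T < (k : ℚ) + 1 / 2 := by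
  classical
  have hconn : T.Connected := hT.isConnected
  set s : ℕ := 2 * k - 2 with hs_def
  have hs2 : 2 ≤ s := by omega
  have hm : 2 * k - 1 = s + 1 := by omega
  -- classification of vertices
  have key : ∀ v : V, ∃ j : Fin (2*k-1), (v = p j) ∨
      ((∀ i, v ≠ p i) ∧ T.Adj v (p j) ∧ ∀ u, T.Adj v u → u = p j) := by
    intro v
    by_cases hv : ∃ i, v = p i
    · obtain ⟨i, hi⟩ := hv; exact ⟨i, Or.inl hi⟩
    · push_neg at hv
      obtain ⟨hn1, hn2⟩ := hout v hv
      obtain ⟨u, hu⟩ := Set.ncard_eq_one.mp hn1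
      have hadj : T.Adj v u := by
        have : u ∈ T.neighborSet v := by rw [hu]; exact Set.mem_singleton u
        exact this
      obtain ⟨j, hj⟩ := hn2 u hadj
      refine ⟨j, Or.inr ⟨hv, ?_, ?_⟩⟩
      · rw [← hj]; exact hadj
      · intro u' hu'
        have h1 : u' ∈ T.neighborSet v := hu'
        rw [hu, Set.mem_singleton_iff] at h1
        rw [h1, hj]
  choose f hf using key
  set P : Finset V := Finset.univ.image p with hP
  have hmemP : ∀ v : V, v ∈ P ↔ ∃ i, v = p i := by
    intro v; simp only [hP, Finset.mem_image, Finset.mem_univ, true_and]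
    constructor
    · rintro ⟨i, hi⟩; exact ⟨i, hi.symm⟩
    · rintro ⟨i, hi⟩; exact ⟨i, hi.symm⟩
  have hfP : ∀ v ∈ P, v = p (f v) := by
    intro v hv
    rcases hf v with h | h
    · exact h
    · obtain ⟨i, hi⟩ := (hmemP v).mp hv
      exact absurd hi (h.1 i)
  have hfp_id : ∀ i, f (p i) = i := by
    intro i
    have h1 : p i ∈ P := (hmemP (p i)).mpr ⟨i, rfl⟩
    exact (hinj (hfP (p i) h1).symm)
  have hpend : ∀ v, v ∉ P →
      T.Adj v (p (f v)) ∧ ∀ u, T.Adj v u → u = p (f v) := by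
    intro v hv
    rcases hf v with h | h
    · exact absurd ((hmemP v).mpr ⟨f v, h⟩) hv
    · exact ⟨h.2.1, h.2.2⟩
  -- cards
  have hPcard : P.card = s + 1 := by
    rw [hP, Finset.card_image_of_injective _ hinj, Finset.card_univ, Fintype.card_fin, hm]
  have hQcard : Pᶜ.card = b := by
    rw [Finset.card_compl, hPcard, hcard]; omega
  -- basic dist facts
  have hne : ∀ i : Fin (2*k-1), (i : ℕ) ≤ s := by
    intro i; have := i.isLt; omega
  have hstep : ∀ (d : ℕ) (i j : Fin (2*k-1)), (i : ℕ) + d = (j : ℕ) →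
      T.dist (p i) (p j) ≤ d := by
    intro d
    induction d with
    | zero =>
      intro i j h
      have : i = j := Fin.ext (by omega)
      rw [this, SimpleGraph.dist_self]
    | succ d ih =>
      intro i j h
      have hi1 : (i : ℕ) + 1 < 2 * k - 1 := by have := j.isLt; omega
      set i' : Fin (2*k-1) := ⟨(i : ℕ) + 1, hi1⟩ with hi'
      have hadj : T.Adj (p i) (p i') := (hpath i i').mpr (Or.inl rfl)
      have h1 : T.dist (p i) (p i') = 1 := SimpleGraph.dist_eq_one_iff_adj.mpr hadj
      have h2 : T.dist (p i') (p j) ≤ d := ih i' j (by simp [hi']; omega)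
      calc T.dist (p i) (p j) ≤ T.dist (p i) (p i') + T.dist (p i') (p j) :=
            hconn.dist_triangle
        _ ≤ 1 + d := by omega
        _ = d + 1 := by omega
  have hdistp : ∀ i j : Fin (2*k-1), T.dist (p i) (p j) ≤ nab i j := by
    intro i j
    rcases Nat.le_total (i : ℕ) (j : ℕ) with h | h
    · have := hstep ((j : ℕ) - i) i j (by omega)
      unfold nab; omega
    · have := hstep ((i : ℕ) - j) j i (by omega)
      rw [SimpleGraph.dist_comm] at this
      unfold nab; omega
  have hdist_vp : ∀ v, v ∉ P → ∀ i : Fin (2*k-1), T.dist v (p i) ≤ 1 + nab (f v) i := by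
    intro v hv i
    have hadj := (hpend v hv).1
    have h1 : T.dist v (p (f v)) = 1 := SimpleGraph.dist_eq_one_iff_adj.mpr hadj
    calc T.dist v (p i) ≤ T.dist v (p (f v)) + T.dist (p (f v)) (p i) := hconn.dist_triangle
      _ ≤ 1 + nab (f v) i := by have := hdistp (f v) i; omega
  have hdist_vw : ∀ v w, v ∉ P → w ∉ P → T.dist v w ≤ nab (f v) (f w) + 2 := by
    intro v w hv hw
    have hadjw := (hpend w hw).1
    have h1 : T.dist (p (f w)) w = 1 := SimpleGraph.dist_eq_one_iff_adj.mpr hadjw.symm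
    have h2 := hdist_vp v hv (f w)
    calc T.dist v w ≤ T.dist v (p (f w)) + T.dist (p (f w)) w := hconn.dist_triangle
      _ ≤ nab (f v) (f w) + 2 := by omega
  -- potential function lower bound
  have hedge : ∀ u w, T.Adj u w → nab (f u) (f w) ≤ 1 := by
    intro u w huw
    by_cases hu : u ∈ P <;> by_cases hw : w ∈ P
    · have e1 := hfP u hu
      have e2 := hfP w hw
      rw [e1, e2] at huw
      have := (hpath (f u) (f w)).mp huw
      unfold nab; omega
    · have := (hpend w hw).2 u huw.symm
      have e1 := hfP u hu
      rw [e1] at this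
      have : f u = f w := hinj this
      unfold nab; omega
    · have := (hpend u hu).2 w huw
      have e1 := hfP w hw
      rw [e1] at this
      have : f w = f u := hinj this
      unfold nab; omega
    · have := (hpend u hu).2 w huw
      exact absurd ((hmemP w).mpr ⟨f u, this⟩) hw
  have hpot : ∀ (u w : V) (W : T.Walk u w), nab (f u) (f w) ≤ W.length := by
    intro u w W
    induction W with
    | nil => unfold nab; omega
    | @cons a c d h' q ih =>
      have := hedge a c h'
      rw [SimpleGraph.Walk.length_cons]
      unfold nab at *; omega
  have hfirst : ∀ (v z : V), v ∉ P → v ≠ z → ∀ W : T.Walk v z,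
      ∃ q : T.Walk (p (f v)) z, W.length = q.length + 1 := by
    intro v z hv hvz W
    cases W with
    | nil => exact absurd rfl hvz
    | cons h q =>
      rename_i u
      have hu : u = p (f v) := (hpend v hv).2 u h
      subst hu
      exact ⟨q, by rw [SimpleGraph.Walk.length_cons]⟩
  have hlb : ∀ v w, v ∉ P → w ∉ P → v ≠ w → nab (f v) (f w) + 2 ≤ T.dist v w := by
    intro v w hv hw hvw
    obtain ⟨W, hW⟩ := hconn.exists_walk_length_eq_dist v w
    obtain ⟨q, hq⟩ := hfirst v w hv hvw W
    have hwp : w ≠ p (f v) := by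
      intro hcon
      exact hw ((hmemP w).mpr ⟨f v, hcon⟩)
    obtain ⟨q2, hq2⟩ := hfirst w (p (f v)) hw hwp q.reverse
    have hlen : q.reverse.length = q.length := SimpleGraph.Walk.length_reverse q
    have hpot2 := hpot _ _ q2
    simp only [hfp_id] at hpot2
    have hnab : nab (f w) ((f v : ℕ)) = nab (f v) (f w) := nab_comm _ _
    unfold nab at *
    omega
  have hwindow : ∀ v ∈ Pᶜ, ∀ w ∈ Pᶜ, v ≠ w → nab (f v) (f w) ≤ s - 1 := by
    intro v hv w hw hvw
    rw [Finset.mem_compl] at hv hw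
    have h1 := hlb v w hv hw hvw
    have hd0 : T.diam ≠ 0 := by rcases hdiam with h | h <;> omega
    have h2 : T.dist v w ≤ T.diam :=
      SimpleGraph.dist_le_diam (SimpleGraph.ediam_ne_top_of_diam_ne_zero hd0)
    rcases hdiam with h | h <;> omega
  -- ===== summation phase =====
  have hfs : ∀ v : V, ((f v : ℕ)) ≤ s := fun v => hne (f v)
  have himg : ∀ (F : V → ℕ), ∑ u ∈ P, F u = ∑ i : Fin (2*k-1), F (p i) := by
    intro F
    rw [hP]
    exact Finset.sum_image (fun x _ y _ h => hinj h)
  set r : ℕ := ((Pᶜ).filter (fun v => 0 < (f v : ℕ) ∧ (f v : ℕ) < s)).card with hr_def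
  set SA : ℕ := ∑ v ∈ Pᶜ, ∑ i ∈ Finset.range (s+1), nab (f v) i with hSA_def
  -- S1 bound
  have hS1 : 6 * (∑ u ∈ P, ∑ v ∈ P, T.dist u v) ≤ 2 * (s * (s+1) * (s+2)) := by
    have e1 : ∑ u ∈ P, ∑ v ∈ P, T.dist u v
        = ∑ i : Fin (2*k-1), ∑ j : Fin (2*k-1), T.dist (p i) (p j) := by
      rw [himg (fun u => ∑ v ∈ P, T.dist u v)]
      exact Finset.sum_congr rfl (fun i _ => himg (fun v => T.dist (p i) v))
    have e2 : ∑ i : Fin (2*k-1), ∑ j : Fin (2*k-1), T.dist (p i) (p j)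
        ≤ ∑ i : Fin (2*k-1), ∑ j : Fin (2*k-1), nab i j :=
      Finset.sum_le_sum (fun i _ => Finset.sum_le_sum (fun j _ => hdistp i j))
    have hrange : Finset.range (2*k-1) = Finset.range (s+1) := by rw [hm]
    have e3 : ∑ i : Fin (2*k-1), ∑ j : Fin (2*k-1), nab (i : ℕ) (j : ℕ)
        = ∑ i ∈ Finset.range (s+1), ∑ j ∈ Finset.range (s+1), nab i j := by
      rw [Fin.sum_univ_eq_sum_range (fun i => ∑ j : Fin (2*k-1), nab i (j : ℕ)), hrange]
      refine Finset.sum_congr rfl (fun i _ => ?_)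
      rw [Fin.sum_univ_eq_sum_range (fun j => nab i j), hrange]
    have e4 := sum_sum_nab (s+1)
    have e5 : s + 1 - 1 = s := by omega
    rw [e5] at e4
    rw [e1]
    calc 6 * (∑ i : Fin (2*k-1), ∑ j : Fin (2*k-1), T.dist (p i) (p j))
        ≤ 6 * (∑ i : Fin (2*k-1), ∑ j : Fin (2*k-1), nab i j) := by omega
      _ = 6 * (∑ i ∈ Finset.range (s+1), ∑ j ∈ Finset.range (s+1), nab i j) := by rw [e3]
      _ = 2 * (s * (s+1) * (s+2)) := by rw [e4]
  -- S2 bound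
  have hinner : ∀ v ∈ Pᶜ, ∑ i : Fin (2*k-1), (1 + nab (f v) (i : ℕ))
      = (s+1) + ∑ i ∈ Finset.range (s+1), nab (f v) i := by
    intro v _
    have hfin := Fin.sum_univ_eq_sum_range (fun i => 1 + nab (f v) i) (2*k-1)
    rw [hfin]
    have hrange : Finset.range (2*k-1) = Finset.range (s+1) := by rw [hm]
    rw [hrange, Finset.sum_add_distrib, Finset.sum_const, Finset.card_range, smul_eq_mul,
      mul_one]
  have hS2 : ∑ u ∈ P, ∑ v ∈ Pᶜ, T.dist u v ≤ b * (s+1) + SA := by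
    calc ∑ u ∈ P, ∑ v ∈ Pᶜ, T.dist u v
        = ∑ v ∈ Pᶜ, ∑ u ∈ P, T.dist u v := Finset.sum_comm
      _ = ∑ v ∈ Pᶜ, ∑ i : Fin (2*k-1), T.dist (p i) v :=
          Finset.sum_congr rfl (fun v _ => himg (fun u => T.dist u v))
      _ ≤ ∑ v ∈ Pᶜ, ∑ i : Fin (2*k-1), (1 + nab (f v) (i : ℕ)) := by
          apply Finset.sum_le_sum
          intro v hv
          apply Finset.sum_le_sum
          intro i _
          have hvP : v ∉ P := Finset.mem_compl.mp hv
          rw [SimpleGraph.dist_comm]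
          exact hdist_vp v hvP i
      _ = ∑ v ∈ Pᶜ, ((s+1) + ∑ i ∈ Finset.range (s+1), nab (f v) i) :=
          Finset.sum_congr rfl hinner
      _ = b * (s+1) + SA := by
          rw [Finset.sum_add_distrib, Finset.sum_const, hQcard, smul_eq_mul, hSA_def]
  have hS3 : ∑ u ∈ Pᶜ, ∑ v ∈ P, T.dist u v ≤ b * (s+1) + SA := by
    calc ∑ u ∈ Pᶜ, ∑ v ∈ P, T.dist u v
        = ∑ u ∈ Pᶜ, ∑ i : Fin (2*k-1), T.dist u (p i) :=
          Finset.sum_congr rfl (fun u _ => himg (fun v => T.dist u v))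
      _ ≤ ∑ u ∈ Pᶜ, ∑ i : Fin (2*k-1), (1 + nab (f u) (i : ℕ)) := by
          apply Finset.sum_le_sum
          intro u hu
          apply Finset.sum_le_sum
          intro i _
          exact hdist_vp u (Finset.mem_compl.mp hu) i
      _ = ∑ v ∈ Pᶜ, ((s+1) + ∑ i ∈ Finset.range (s+1), nab (f v) i) :=
          Finset.sum_congr rfl hinner
      _ = b * (s+1) + SA := by
          rw [Finset.sum_add_distrib, Finset.sum_const, hQcard, smul_eq_mul, hSA_def]
  -- A-sum bound
  have hAsum : 24 * SA + 24 * ((s-1) * r) ≤ 12 * (b * (s * (s+1))) := by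
    have hper : ∀ v ∈ Pᶜ, 24 * (∑ i ∈ Finset.range (s+1), nab (f v) i)
        + 24 * (s - 1) * (if 0 < (f v : ℕ) ∧ (f v : ℕ) < s then 1 else 0)
        ≤ 12 * (s * (s+1)) := fun v _ => A_bound s (f v) hs2 (hfs v)
    have hsum := Finset.sum_le_sum hper
    rw [Finset.sum_add_distrib, ← Finset.mul_sum, ← Finset.mul_sum,
      Finset.sum_const, hQcard, smul_eq_mul] at hsum
    have hrr : (∑ v ∈ Pᶜ, (if 0 < (f v : ℕ) ∧ (f v : ℕ) < s then (1:ℕ) else 0)) = r := by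
      rw [hr_def, Finset.card_filter]
    rw [hrr] at hsum
    have e1 : 24 * (s - 1) * r = 24 * ((s - 1) * r) := by rw [Nat.mul_assoc]
    have e2 : b * (12 * (s * (s+1))) = 12 * (b * (s * (s+1))) := by ring
    omega
  -- S4 bound
  have hS4 : ∑ u ∈ Pᶜ, ∑ v ∈ Pᶜ, T.dist u v
      ≤ (∑ v ∈ Pᶜ, ∑ w ∈ Pᶜ, nab (f v) (f w)) + 2 * (b * b) := by
    calc ∑ u ∈ Pᶜ, ∑ v ∈ Pᶜ, T.dist u v
        ≤ ∑ u ∈ Pᶜ, ∑ v ∈ Pᶜ, (nab (f u) (f v) + 2) := by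
          apply Finset.sum_le_sum
          intro u hu
          apply Finset.sum_le_sum
          intro v hv
          exact hdist_vw u v (Finset.mem_compl.mp hu) (Finset.mem_compl.mp hv)
      _ = (∑ v ∈ Pᶜ, ∑ w ∈ Pᶜ, nab (f v) (f w)) + 2 * (b * b) := by
          simp only [Finset.sum_add_distrib, Finset.sum_const, hQcard, smul_eq_mul]
          have e : b * (b * 2) = 2 * (b * b) := by ring
          omega
  -- threshold bounds
  have hDord : (∑ v ∈ Pᶜ, ∑ w ∈ Pᶜ, nab (f v) (f w))
      = ∑ t ∈ Finset.range s, 2 * (((Pᶜ).filter (fun v => (f v : ℕ) ≤ t)).card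
          * ((Pᶜ).filter (fun v => ¬ (f v : ℕ) ≤ t)).card) :=
    dord_eq (Pᶜ) (fun v => (f v : ℕ)) s (fun v _ => hfs v)
  have hthr : ∑ t ∈ Finset.range s, 4 * (((Pᶜ).filter (fun v => (f v : ℕ) ≤ t)).card
        * ((Pᶜ).filter (fun v => ¬ (f v : ℕ) ≤ t)).card)
      ≤ (s - 1) * ((b - 1) ^ 2 + 4 * r) :=
    thresh_sum (Pᶜ) (fun v => (f v : ℕ)) s b r hs2 hQcard (fun v _ => hfs v)
      (fun v hv w hw hvw => hwindow v hv w hw hvw) hr_def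
  have hdub : (∑ t ∈ Finset.range s, 4 * (((Pᶜ).filter (fun v => (f v : ℕ) ≤ t)).card
        * ((Pᶜ).filter (fun v => ¬ (f v : ℕ) ≤ t)).card))
      = 2 * (∑ t ∈ Finset.range s, 2 * (((Pᶜ).filter (fun v => (f v : ℕ) ≤ t)).card
          * ((Pᶜ).filter (fun v => ¬ (f v : ℕ) ≤ t)).card)) := by
    rw [Finset.mul_sum]
    exact Finset.sum_congr rfl (fun t _ => by ring)
  -- assemble
  have hsplitV : ∀ (F : V → ℕ), ∑ v : V, F v = ∑ v ∈ P, F v + ∑ v ∈ Pᶜ, F v :=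
    fun F => (Finset.sum_add_sum_compl P F).symm
  have hSD : ∑ u : V, ∑ v : V, T.dist u v
      = (∑ u ∈ P, ∑ v ∈ P, T.dist u v) + (∑ u ∈ P, ∑ v ∈ Pᶜ, T.dist u v)
        + ((∑ u ∈ Pᶜ, ∑ v ∈ P, T.dist u v) + (∑ u ∈ Pᶜ, ∑ v ∈ Pᶜ, T.dist u v)) := by
    rw [hsplitV (fun u => ∑ v : V, T.dist u v)]
    rw [Finset.sum_congr rfl (fun u _ => hsplitV (fun v => T.dist u v)),
        Finset.sum_congr rfl (fun u (_ : u ∈ Pᶜ) => hsplitV (fun v => T.dist u v))]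
    rw [Finset.sum_add_distrib, Finset.sum_add_distrib]
  have harith := final_arith s b hs2 hb
  have hmuladd : (s - 1) * ((b - 1) ^ 2 + 4 * r)
      = (s - 1) * (b - 1) ^ 2 + 4 * ((s - 1) * r) := by
    rw [Nat.mul_add]
    ring_nf
  have hmain : 12 * (∑ u : V, ∑ v : V, T.dist u v)
      < 6 * ((s + 3) * ((s + 1 + b) * (s + b))) := by
    rw [hSD]
    rw [hDord] at hS4
    omega
  -- ===== final cast =====
  have e : s + 3 = 2*k+1 := by omega
  have hch : ((2*k-1+b).choose 2) * 2 = (s+1+b) * (s+b) := by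
    have he : Even ((2*k-1+b - 1) * ((2*k-1+b - 1) + 1)) := Nat.even_mul_succ_self _
    obtain ⟨c, hc⟩ := he
    have h1 : (2*k-1+b - 1) + 1 = 2*k-1+b := by omega
    rw [h1] at hc
    rw [Nat.choose_two_right]
    have h2 : (2*k-1+b) * (2*k-1+b-1) = (2*k-1+b-1) * (2*k-1+b) := Nat.mul_comm _ _
    have h3 : (s+1+b) * (s+b) = (2*k-1+b) * (2*k-1+b-1) := by
      have e1 : s+1+b = 2*k-1+b := by omega
      have e2 : s+b = 2*k-1+b-1 := by omega
      rw [e1, e2]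
    omega
  rw [e, ← hch] at hmain
  have h2 : 6*((2*k+1)*(((2*k-1+b).choose 2)*2)) = 12*((2*k+1)*((2*k-1+b).choose 2)) := by
    ring
  rw [h2] at hmain
  have hlt : (∑ u : V, ∑ v : V, T.dist u v) < (2*k+1) * ((2*k-1+b).choose 2) :=
    Nat.lt_of_mul_lt_mul_left hmain
  unfold avgDist wiener
  rw [hcard]
  have hCpos : (0:ℚ) < (((2*k-1+b).choose 2 : ℕ) : ℚ) := by
    have h0 : 0 < (2*k-1+b).choose 2 := Nat.choose_pos (by omega)
    exact_mod_cast h0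
  rw [div_lt_iff₀ hCpos]
  have hcast : (∑ u : V, ∑ v : V, (T.dist u v : ℚ))
      = ((∑ u : V, ∑ v : V, T.dist u v : ℕ) : ℚ) := by push_cast; rfl
  rw [hcast]
  have hq : ((∑ u : V, ∑ v : V, T.dist u v : ℕ) : ℚ)
      < (((2*k+1) * ((2*k-1+b).choose 2) : ℕ) : ℚ) := by exact_mod_cast hlt
  push_cast at hq
  nlinarith [hCpos, hq]
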